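/- arXiv:2603.23042 — 4 statements merged into one kernel-verified Lean document; each statement's English description precedes it below -/
import Mathlib

section
/- In the naive N-reel Markov reward process under the random policy, where at each step a reel index is chosen uniformly at random and a component weight is drawn i.i.d. from p, the long-run average cost equals the long-run average cost g_1 of the single-reel Markov reward process with the same component distribution; in particular the long-run average cost is independent of N. -/
open Finset

/-- Updated reel weight. -/
def reelE (B w x : ℕ) : ℕ := if x ≤ w then w - x else B - x

/-- Filament waste (real-valued). -/
def reelC (w x : ℕ) : ℝ := if x ≤ w then 0 else w

/-- One step of the single-reel Markov chain, acting on distributions over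
reel weights `{0,...,B-1}`: the reel receives a component `X ~ p` and moves
from `w` to `e(w,X)`. -/
noncomputable def step1 (B : ℕ) (p : ℕ → ℝ) (μ : ℕ → ℝ) : ℕ → ℝ :=
  fun w' => ∑ w ∈ range B, μ w *
    ∑ x ∈ (Icc 1 B).filter (fun x => reelE B w x = w'), p x

/-- Expected one-step cost of the single-reel chain in distribution `μ`. -/
noncomputable def ec1 (B : ℕ) (p : ℕ → ℝ) (μ : ℕ → ℝ) : ℝ :=
  ∑ w ∈ range B, μ w * ∑ x ∈ Icc 1 B, p x * reelC w x

/-- One step of the naive `N`-reel Markov chain under the random policy,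
acting on distributions over reel-weight vectors: a reel index `n` is chosen
uniformly, a component `X ~ p` arrives, and only coordinate `n` is updated to
`e(w_n, X)`. -/
noncomputable def stepN (B N : ℕ) (p : ℕ → ℝ)
    (ν : (Fin N → ℕ) → ℝ) : (Fin N → ℕ) → ℝ :=
  fun s' => ∑ s ∈ Fintype.piFinset (fun _ : Fin N => range B), ν s *
    ((1 / (N : ℝ)) * ∑ n : Fin N,
      ∑ x ∈ (Icc 1 B).filter
        (fun x => Function.update s n (reelE B (s n) x) = s'), p x)

/-- Expected one-step cost of the naive `N`-reel chain under the random
policy, in distribution `ν`. -/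
noncomputable def ecN (B N : ℕ) (p : ℕ → ℝ) (ν : (Fin N → ℕ) → ℝ) : ℝ :=
  ∑ s ∈ Fintype.piFinset (fun _ : Fin N => range B), ν s *
    ((1 / (N : ℝ)) * ∑ n : Fin N, ∑ x ∈ Icc 1 B, p x * reelC (s n) x)



noncomputable def lazyW (α : ℝ) (t j : ℕ) : ℝ :=
  (t.choose j : ℝ) * α ^ j * (1 - α) ^ (t - j)

lemma lazyW_nonneg {α : ℝ} (h0 : 0 ≤ α) (h1 : α ≤ 1) (t j : ℕ) : 0 ≤ lazyW α t j := by
  unfold lazyW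
  have : (0:ℝ) ≤ 1 - α := by linarith
  positivity

lemma lazyW_eq_zero {α : ℝ} {t j : ℕ} (h : t < j) : lazyW α t j = 0 := by
  unfold lazyW
  rw [Nat.choose_eq_zero_of_lt h]
  simp

lemma lazyW_sum (α : ℝ) (t : ℕ) : ∑ j ∈ range (t + 1), lazyW α t j = 1 := by
  have h := add_pow α (1 - α) t
  simp only [add_sub_cancel, one_pow] at h
  calc ∑ j ∈ range (t + 1), lazyW α t j
      = ∑ m ∈ range (t + 1), α ^ m * (1 - α) ^ (t - m) * (t.choose m : ℝ) := by
        refine Finset.sum_congr rfl fun j _ => ?_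
        unfold lazyW; ring
    _ = 1 := h.symm

lemma lazyW_rec (α : ℝ) (t j : ℕ) :
    lazyW α t (j + 1) = α * ∑ s ∈ range t, lazyW α s j * (1 - α) ^ (t - 1 - s) := by
  cases t with
  | zero => simp [lazyW_eq_zero (Nat.zero_lt_succ j)]
  | succ u =>
    have hsub : Icc j u ⊆ range (u + 1) := by
      intro s hs
      simp only [mem_Icc] at hs
      simp [Nat.lt_succ_of_le hs.2]
    have hzero : ∀ s ∈ range (u + 1), s ∉ Icc j u →
        lazyW α s j * (1 - α) ^ (u + 1 - 1 - s) = 0 := by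
      intro s hs hns
      simp only [mem_range] at hs
      simp only [mem_Icc, not_and, not_le] at hns
      have : s < j := by
        by_contra h
        exact absurd (hns (le_of_not_gt h)) (not_lt.2 (Nat.lt_succ_iff.1 hs))
      rw [lazyW_eq_zero this, zero_mul]
    rw [← Finset.sum_subset hsub hzero]
    have hterm : ∀ s ∈ Icc j u,
        lazyW α s j * (1 - α) ^ (u + 1 - 1 - s) = (s.choose j : ℝ) * (α ^ j * (1 - α) ^ (u - j)) := by
      intro s hs
      simp only [mem_Icc] at hs
      have e : u + 1 - 1 - s = u - s := by omega
      rw [e]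
      unfold lazyW
      rw [mul_assoc, mul_assoc, ← pow_add]
      have e2 : s - j + (u - s) = u - j := by omega
      rw [e2]
    rw [Finset.sum_congr rfl hterm, ← Finset.sum_mul, ← Nat.cast_sum, Nat.sum_Icc_choose]
    unfold lazyW
    have : u + 1 - (j + 1) = u - j := by omega
    rw [this]
    ring

lemma lazyW_pascal (α : ℝ) (t j : ℕ) :
    lazyW α (t + 1) (j + 1) = (1 - α) * lazyW α t (j + 1) + α * lazyW α t j := by
  rcases lt_or_ge j t with h | h
  · -- j + 1 ≤ t
    unfold lazyW
    rw [Nat.choose_succ_succ t j]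
    push_cast
    have e2 : t - j = (t - (j+1)) + 1 := by omega
    rw [e2]
    ring
  · rcases eq_or_lt_of_le h with rfl | h2
    · -- j = t
      unfold lazyW
      rw [Nat.choose_eq_zero_of_lt (Nat.lt_succ_self t), Nat.choose_self, Nat.choose_self]
      simp [Nat.sub_self]
      ring
    · -- t < j
      rw [lazyW_eq_zero (by omega), lazyW_eq_zero (by omega), lazyW_eq_zero (by omega)]
      ring

lemma lazyW_col_diff (α : ℝ) (T j : ℕ) :
    ∑ t ∈ range T, (lazyW α t j - lazyW α t (j + 1))
      = ∑ s ∈ range T, lazyW α s j * (1 - α) ^ (T - 1 - s) := by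
  induction T with
  | zero => simp
  | succ T ih =>
    rw [Finset.sum_range_succ, ih, Finset.sum_range_succ]
    have hrec := lazyW_rec α T j
    have hR : ∀ s ∈ range T, lazyW α s j * (1 - α) ^ (T + 1 - 1 - s)
        = (1 - α) * (lazyW α s j * (1 - α) ^ (T - 1 - s)) := by
      intro s hs
      simp only [mem_range] at hs
      have : T + 1 - 1 - s = (T - 1 - s) + 1 := by omega
      rw [this, pow_succ]
      ring
    rw [Finset.sum_congr rfl hR, ← Finset.mul_sum]
    have hTT : T + 1 - 1 - T = 0 := by omega
    rw [hTT, pow_zero, mul_one, hrec]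
    ring

lemma lazyW_col_mono {α : ℝ} (h0 : 0 ≤ α) (h1 : α ≤ 1) (T j : ℕ) :
    ∑ t ∈ range T, lazyW α t (j + 1) ≤ ∑ t ∈ range T, lazyW α t j := by
  have h := lazyW_col_diff α T j
  have hnn : 0 ≤ ∑ s ∈ range T, lazyW α s j * (1 - α) ^ (T - 1 - s) := by
    apply Finset.sum_nonneg
    intro s _
    have : (0:ℝ) ≤ 1 - α := by linarith
    exact mul_nonneg (lazyW_nonneg h0 h1 s j) (pow_nonneg this _)
  rw [Finset.sum_sub_distrib] at h
  linarith

lemma lazyW_col_antitone {α : ℝ} (h0 : 0 ≤ α) (h1 : α ≤ 1) (T : ℕ) :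
    Antitone (fun j => ∑ t ∈ range T, lazyW α t j) :=
  antitone_nat_of_succ_le fun j => lazyW_col_mono h0 h1 T j

lemma lazyW_col_zero_le {α : ℝ} (h0 : 0 < α) (h1 : α ≤ 1) (T : ℕ) :
    ∑ t ∈ range T, lazyW α t 0 ≤ 1 / α := by
  have he : ∀ t, lazyW α t 0 = (1 - α) ^ t := by
    intro t; unfold lazyW; simp
  simp only [he]
  have key : α * ∑ t ∈ range T, (1 - α) ^ t = 1 - (1 - α) ^ T := by
    induction T with
    | zero => simp
    | succ T ih =>
      rw [Finset.sum_range_succ, mul_add, ih, pow_succ]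
      ring
  have h1a : (0:ℝ) ≤ (1 - α) ^ T := pow_nonneg (by linarith) _
  rw [le_div_iff₀ h0]
  nlinarith

lemma lazyW_col_le {α : ℝ} (h0 : 0 < α) (h1 : α ≤ 1) (T j : ℕ) :
    ∑ t ∈ range T, lazyW α t j ≤ 1 / α :=
  le_trans (lazyW_col_antitone h0.le h1 T (Nat.zero_le j)) (lazyW_col_zero_le h0 h1 T)

lemma lazyW_col_total (α : ℝ) (T : ℕ) :
    ∑ j ∈ range T, ∑ t ∈ range T, lazyW α t j = T := by
  rw [Finset.sum_comm]
  have : ∀ t ∈ range T, ∑ j ∈ range T, lazyW α t j = 1 := by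
    intro t ht
    simp only [mem_range] at ht
    rw [← lazyW_sum α t]
    refine (Finset.sum_subset ?_ ?_).symm
    · intro j hj; simp only [mem_range] at *; omega
    · intro j hj hnj
      simp only [mem_range, not_lt] at hj hnj
      exact lazyW_eq_zero (by omega)
  rw [Finset.sum_congr rfl this]
  simp

/-- Abel summation with boundary term. -/
lemma abel_sum (u d : ℕ → ℝ) (T : ℕ) :
    ∑ j ∈ range T, u j * d j
      = ∑ j ∈ range T, (u j - u (j + 1)) * (∑ i ∈ range (j + 1), d i)
        + u T * (∑ i ∈ range T, d i) := by
  induction T with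
  | zero => simp
  | succ T ih =>
    rw [Finset.sum_range_succ, ih, Finset.sum_range_succ (fun j => (u j - u (j+1)) * _)]
    rw [Finset.sum_range_succ d]
    ring

lemma euler_cesaro {α : ℝ} (h0 : 0 < α) (h1 : α ≤ 1) (a : ℕ → ℝ) (M : ℝ)
    (hM : ∀ j, |a j| ≤ M) (g : ℝ)
    (ha : Filter.Tendsto (fun T : ℕ => (1 / (T:ℝ)) * ∑ j ∈ range T, a j)
      Filter.atTop (nhds g)) :
    Filter.Tendsto (fun T : ℕ => (1 / (T:ℝ)) * ∑ t ∈ range T,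
      ∑ j ∈ range (t + 1), lazyW α t j * a j) Filter.atTop (nhds g) := by
  set d : ℕ → ℝ := fun j => a j - g with hd
  set A : ℕ → ℝ := fun k => ∑ i ∈ range k, d i with hA
  have hMnn : 0 ≤ M := le_trans (abs_nonneg _) (hM 0)
  rw [Metric.tendsto_atTop]
  intro ε hε
  rw [Metric.tendsto_atTop] at ha
  obtain ⟨K0, hK0⟩ := ha (ε/4) (by positivity)
  set K : ℕ := max K0 1 with hKdef
  -- |A k| ≤ ε/4 * k for k ≥ K
  have hAk : ∀ k : ℕ, K ≤ k → |A k| ≤ ε/4 * k := by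
    intro k hk
    have hk1 : 1 ≤ k := le_trans (le_max_right _ _) hk
    have hdist := hK0 k (le_trans (le_max_left _ _) hk)
    rw [Real.dist_eq] at hdist
    have hkpos : (0:ℝ) < k := by exact_mod_cast hk1
    have hAeq : A k = (k:ℝ) * ((1/(k:ℝ)) * ∑ j ∈ range k, a j - g) := by
      simp only [hA, hd, Finset.sum_sub_distrib, Finset.sum_const, Finset.card_range,
        nsmul_eq_mul, smul_eq_mul]
      field_simp
    rw [hAeq, abs_mul, abs_of_pos hkpos]
    have h2 : (k:ℝ) * |(1/(k:ℝ)) * ∑ j ∈ range k, a j - g| ≤ (k:ℝ) * (ε/4) :=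
      mul_le_mul_of_nonneg_left hdist.le hkpos.le
    linarith [h2]
  -- uniform bound on |A k|
  have hAall : ∀ k : ℕ, |A k| ≤ (M + |g|) * k := by
    intro k
    calc |A k| ≤ ∑ i ∈ range k, |d i| := Finset.abs_sum_le_sum_abs _ _
      _ ≤ ∑ i ∈ range k, (M + |g|) := by
          refine Finset.sum_le_sum fun i _ => ?_
          calc |d i| ≤ |a i| + |g| := abs_sub _ _
            _ ≤ M + |g| := by linarith [hM i]
      _ = (M + |g|) * k := by
          rw [Finset.sum_const, Finset.card_range, nsmul_eq_mul]; ring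
  have hCnn : 0 ≤ (M + |g|) * (K:ℝ) := by positivity
  have hball : ∀ k : ℕ, |A k| ≤ (M + |g|) * (K:ℝ) + ε/4 * k := by
    intro k
    rcases le_or_gt K k with h | h
    · have := hAk k h
      linarith
    · have h2 := hAall k
      have h3 : (M + |g|) * (k:ℝ) ≤ (M + |g|) * (K:ℝ) := by
        apply mul_le_mul_of_nonneg_left _ (by positivity)
        exact_mod_cast h.le
      have h4 : (0:ℝ) ≤ ε/4 * k := by positivity
      linarith
  -- choose threshold
  set C : ℝ := (M + |g|) * (K:ℝ) * (1/α) with hCdef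
  have hC0 : 0 ≤ C := by positivity
  obtain ⟨T1, hT1⟩ := exists_nat_gt (4 * C / ε)
  refine ⟨max T1 1, fun T hT => ?_⟩
  have hT1' : T1 ≤ T := le_trans (le_max_left _ _) hT
  have hTpos : 1 ≤ T := le_trans (le_max_right _ _) hT
  have hTr : (0:ℝ) < T := by exact_mod_cast hTpos
  -- the column sums
  set u : ℕ → ℝ := fun j => ∑ t ∈ range T, lazyW α t j with hu
  have huT : u T = 0 :=
    Finset.sum_eq_zero fun t ht => lazyW_eq_zero (mem_range.1 ht)
  have hVnn : ∀ j, 0 ≤ u j - u (j+1) := fun j => sub_nonneg.2 (lazyW_col_mono h0.le h1 T j)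
  have hu0 : u 0 ≤ 1/α := lazyW_col_zero_le h0 h1 T
  have htele : ∑ j ∈ range T, (u j - u (j+1)) = u 0 - u T := Finset.sum_range_sub' u T
  have hsumU : ∑ j ∈ range T, u j = T := lazyW_col_total α T
  have hweight : ∑ j ∈ range T, (u j - u (j+1)) * ((j:ℝ)+1) = T := by
    have habel := abel_sum u (fun _ => 1) T
    simp only [mul_one, Finset.sum_const, Finset.card_range, nsmul_eq_mul] at habel
    rw [hsumU, huT] at habel
    have : ∀ j ∈ range T, (u j - u (j+1)) * (((j:ℕ)+1 : ℕ):ℝ) = (u j - u (j+1)) * ((j:ℝ)+1) := by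
      intro j _; push_cast; ring
    rw [Finset.sum_congr rfl this] at habel
    linarith [habel]
  -- swap sums
  have hswap : ∑ t ∈ range T, ∑ j ∈ range (t+1), lazyW α t j * a j
      = ∑ j ∈ range T, u j * a j := by
    have h1' : ∀ t ∈ range T, ∑ j ∈ range (t+1), lazyW α t j * a j
        = ∑ j ∈ range T, lazyW α t j * a j := by
      intro t ht
      simp only [mem_range] at ht
      refine Finset.sum_subset (fun j hj => ?_) (fun j _ hnj => ?_)
      · simp only [mem_range] at *; omega
      · simp only [mem_range, not_lt] at hnj
        rw [lazyW_eq_zero (by omega), zero_mul]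
    rw [Finset.sum_congr rfl h1', Finset.sum_comm]
    exact Finset.sum_congr rfl fun j _ => (Finset.sum_mul _ _ _).symm
  -- centering
  have hcenter : ∑ j ∈ range T, u j * a j - (T:ℝ) * g = ∑ j ∈ range T, u j * d j := by
    have : ∑ j ∈ range T, u j * d j
        = ∑ j ∈ range T, u j * a j - (∑ j ∈ range T, u j) * g := by
      simp only [hd, mul_sub]
      rw [Finset.sum_sub_distrib, Finset.sum_mul]
    rw [this, hsumU]
  -- Abel
  have habel : ∑ j ∈ range T, u j * d j
      = ∑ j ∈ range T, (u j - u (j+1)) * A (j+1) := by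
    have := abel_sum u d T
    rw [huT] at this
    simpa using this
  -- bound
  have hbound : |∑ j ∈ range T, (u j - u (j+1)) * A (j+1)| ≤ C + ε/4 * T := by
    calc |∑ j ∈ range T, (u j - u (j+1)) * A (j+1)|
        ≤ ∑ j ∈ range T, |(u j - u (j+1)) * A (j+1)| := Finset.abs_sum_le_sum_abs _ _
      _ ≤ ∑ j ∈ range T, ((M + |g|) * (K:ℝ) * (u j - u (j+1))
            + ε/4 * ((u j - u (j+1)) * ((j:ℝ)+1))) := by
          refine Finset.sum_le_sum fun j _ => ?_
          rw [abs_mul, abs_of_nonneg (hVnn j)]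
          have hb := hball (j+1)
          push_cast at hb
          calc (u j - u (j+1)) * |A (j+1)|
              ≤ (u j - u (j+1)) * ((M + |g|) * (K:ℝ) + ε/4 * ((j:ℝ)+1)) :=
                mul_le_mul_of_nonneg_left hb (hVnn j)
            _ = (M + |g|) * (K:ℝ) * (u j - u (j+1))
                + ε/4 * ((u j - u (j+1)) * ((j:ℝ)+1)) := by ring
      _ = (M + |g|) * (K:ℝ) * (u 0 - u T) + ε/4 * (T:ℝ) := by
          rw [Finset.sum_add_distrib, ← Finset.mul_sum, ← Finset.mul_sum, htele, hweight]
      _ ≤ C + ε/4 * T := by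
          rw [huT, sub_zero, hCdef]
          have : (M + |g|) * (K:ℝ) * u 0 ≤ (M + |g|) * (K:ℝ) * (1/α) :=
            mul_le_mul_of_nonneg_left hu0 (by positivity)
          linarith
  -- conclude
  rw [Real.dist_eq, hswap]
  have heq : (1 / (T:ℝ)) * ∑ j ∈ range T, u j * a j - g
      = (1 / (T:ℝ)) * (∑ j ∈ range T, u j * a j - (T:ℝ) * g) := by
    field_simp
  rw [heq, hcenter, habel, abs_mul, abs_of_pos (by positivity : (0:ℝ) < 1/(T:ℝ))]
  have hfin : (1/(T:ℝ)) * |∑ j ∈ range T, (u j - u (j+1)) * A (j+1)|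
      ≤ (1/(T:ℝ)) * (C + ε/4 * T) :=
    mul_le_mul_of_nonneg_left hbound (by positivity)
  have hCT : (1/(T:ℝ)) * C < ε/2 := by
    have hTbig : 4 * C / ε < (T:ℝ) := lt_of_lt_of_le hT1 (by exact_mod_cast hT1')
    rw [div_lt_iff₀ hε] at hTbig
    rw [one_div, inv_mul_lt_iff₀ hTr]  -- maybe wrong lemma; adjust
    nlinarith
  have hrest : (1/(T:ℝ)) * (C + ε/4 * T) = (1/(T:ℝ)) * C + ε/4 := by
    field_simp
  calc (1/(T:ℝ)) * |∑ j ∈ range T, (u j - u (j+1)) * A (j+1)|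
      ≤ (1/(T:ℝ)) * C + ε/4 := by rw [← hrest]; exact hfin
    _ < ε/2 + ε/4 := by linarith
    _ < ε := by linarith

lemma reelE_lt {B w x : ℕ} (hB : 0 < B) (hw : w < B) (hx : x ∈ Icc 1 B) :
    reelE B w x < B := by
  simp only [mem_Icc] at hx
  unfold reelE
  split <;> omega

noncomputable def margN (B N : ℕ) (ν : (Fin N → ℕ) → ℝ) (n : Fin N) : ℕ → ℝ :=
  fun w => ∑ s ∈ (Fintype.piFinset fun _ : Fin N => range B).filter
    (fun s => s n = w), ν s

lemma margN_mass (B N : ℕ) (ν : (Fin N → ℕ) → ℝ) (n : Fin N) :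
    ∑ w ∈ range B, margN B N ν n w
      = ∑ s ∈ Fintype.piFinset (fun _ : Fin N => range B), ν s := by
  unfold margN
  exact Finset.sum_fiberwise_of_maps_to
    (fun s hs => Fintype.mem_piFinset.1 hs n) ν

lemma margN_nonneg (B N : ℕ) (ν : (Fin N → ℕ) → ℝ) (hν : ∀ s, 0 ≤ ν s)
    (n : Fin N) (w : ℕ) : 0 ≤ margN B N ν n w :=
  Finset.sum_nonneg fun s _ => hν s

lemma margN_supp (B N : ℕ) (ν : (Fin N → ℕ) → ℝ) (n : Fin N) (w : ℕ)
    (hw : B ≤ w) : margN B N ν n w = 0 := by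
  unfold margN
  refine Finset.sum_eq_zero fun s hs => ?_
  rcases Finset.mem_filter.1 hs with ⟨hs1, hs2⟩
  have := Fintype.mem_piFinset.1 hs1 n
  rw [mem_range] at this
  omega

lemma ecN_eq (B N : ℕ) (p : ℕ → ℝ) (ν : (Fin N → ℕ) → ℝ) :
    ecN B N p ν = (1 / (N:ℝ)) * ∑ n : Fin N, ec1 B p (margN B N ν n) := by
  have key : ∀ n : Fin N, ec1 B p (margN B N ν n)
      = ∑ s ∈ Fintype.piFinset (fun _ : Fin N => range B),
          ν s * (∑ x ∈ Icc 1 B, p x * reelC (s n) x) := by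
    intro n
    unfold ec1 margN
    rw [← Finset.sum_fiberwise_of_maps_to
      (fun s hs => Fintype.mem_piFinset.1 hs n)
      (fun s => ν s * (∑ x ∈ Icc 1 B, p x * reelC (s n) x))]
    refine Finset.sum_congr rfl fun w _ => ?_
    rw [Finset.sum_mul]
    refine Finset.sum_congr rfl fun s hs => ?_
    rw [(Finset.mem_filter.1 hs).2]
  rw [Finset.mul_sum]
  simp only [key]
  unfold ecN
  simp only [Finset.mul_sum]
  rw [Finset.sum_comm]
  refine Finset.sum_congr rfl fun n _ => Finset.sum_congr rfl fun s _ =>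
    Finset.sum_congr rfl fun x _ => by ring

noncomputable def lazyStep (B : ℕ) (p : ℕ → ℝ) (α : ℝ) (μ : ℕ → ℝ) : ℕ → ℝ :=
  fun w => (1 - α) * μ w + α * step1 B p μ w

lemma margN_stepN (B N : ℕ) (hB : 0 < B) (hN : 0 < N) (p : ℕ → ℝ)
    (hp1 : ∑ x ∈ Icc 1 B, p x = 1) (ν : (Fin N → ℕ) → ℝ) (n : Fin N) :
    margN B N (stepN B N p ν) n = lazyStep B p (1 / (N:ℝ)) (margN B N ν n) := by
  funext w'
  have hNr : ((N:ℝ)) ≠ 0 := Nat.cast_ne_zero.2 hN.ne'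
  set pi : Finset (Fin N → ℕ) := Fintype.piFinset (fun _ : Fin N => range B) with hpi
  -- LHS rewriting
  have lhs_eq : margN B N (stepN B N p ν) n w'
      = ∑ s ∈ pi, ν s * ((1/(N:ℝ)) *
          ((if s n = w' then ((N:ℝ) - 1) else 0)
            + ∑ x ∈ (Icc 1 B).filter (fun x => reelE B (s n) x = w'), p x)) := by
    unfold margN stepN
    rw [Finset.sum_comm]
    refine Finset.sum_congr rfl fun s hs => ?_
    -- pull constants out of the s' sum
    have hpull : ∑ s' ∈ pi.filter (fun s' => s' n = w'),
        ν s * ((1/(N:ℝ)) * ∑ m : Fin N,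
          ∑ x ∈ (Icc 1 B).filter
            (fun x => Function.update s m (reelE B (s m) x) = s'), p x)
        = ν s * ((1/(N:ℝ)) * ∑ m : Fin N, ∑ s' ∈ pi.filter (fun s' => s' n = w'),
            ∑ x ∈ (Icc 1 B).filter
              (fun x => Function.update s m (reelE B (s m) x) = s'), p x) := by
      simp only [← Finset.mul_sum]
      rw [Finset.sum_comm]
    rw [hpull]
    congr 2
    -- now compute the m-sum
    have hfib : ∀ m : Fin N, ∑ s' ∈ pi.filter (fun s' => s' n = w'),
        ∑ x ∈ (Icc 1 B).filter
          (fun x => Function.update s m (reelE B (s m) x) = s'), p x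
        = ∑ x ∈ (Icc 1 B).filter
            (fun x => Function.update s m (reelE B (s m) x) n = w'), p x := by
      intro m
      rw [Finset.sum_fiberwise_eq_sum_filter]
      congr 1
      refine Finset.filter_congr fun x hx => ?_
      simp only [Finset.mem_filter]
      constructor
      · rintro ⟨-, h2⟩; exact h2
      · intro h2
        refine ⟨?_, h2⟩
        rw [hpi, Fintype.mem_piFinset]
        intro i
        rw [Function.update_apply]
        split
        · exact mem_range.2 (reelE_lt hB (mem_range.1 (Fintype.mem_piFinset.1 hs m)) hx)
        · exact Fintype.mem_piFinset.1 hs i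
    simp only [hfib]
    -- split the m-sum into m = n and m ≠ n
    rw [← Finset.sum_erase_add _ _ (Finset.mem_univ n)]
    have hne : ∀ m ∈ Finset.univ.erase n,
        ∑ x ∈ (Icc 1 B).filter
          (fun x => Function.update s m (reelE B (s m) x) n = w'), p x
        = if s n = w' then 1 else 0 := by
      intro m hm
      have hmn : n ≠ m := fun h => (Finset.mem_erase.1 hm).1 h.symm
      have : ∀ x, Function.update s m (reelE B (s m) x) n = s n :=
        fun x => Function.update_of_ne hmn _ s
      simp only [this]
      by_cases hc : s n = w'
      · rw [if_pos hc, Finset.filter_true_of_mem (fun x _ => hc), hp1]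
      · rw [if_neg hc, Finset.filter_false_of_mem (fun x _ => hc), Finset.sum_empty]
    rw [Finset.sum_congr rfl hne, Finset.sum_const, Finset.card_erase_of_mem (Finset.mem_univ n),
      Finset.card_univ, Fintype.card_fin]
    have hupd : ∀ x, Function.update s n (reelE B (s n) x) n = reelE B (s n) x :=
      fun x => Function.update_self _ _ _
    simp only [hupd]
    rw [nsmul_eq_mul]
    have hcast : ((N - 1 : ℕ) : ℝ) = (N:ℝ) - 1 := by
      have : 1 ≤ N := hN
      push_cast [this]
      ring
    rw [hcast]
    by_cases hc : s n = w' <;> simp [hc]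
  rw [lhs_eq]
  -- RHS rewriting
  have rhs2 : step1 B p (margN B N ν n) w'
      = ∑ s ∈ pi, ν s * ∑ x ∈ (Icc 1 B).filter
          (fun x => reelE B (s n) x = w'), p x := by
    unfold step1 margN
    rw [← Finset.sum_fiberwise_of_maps_to
      (fun s hs => Fintype.mem_piFinset.1 hs n)
      (fun s => ν s * ∑ x ∈ (Icc 1 B).filter
        (fun x => reelE B (s n) x = w'), p x)]
    refine Finset.sum_congr rfl fun w _ => ?_
    rw [Finset.sum_mul]
    refine Finset.sum_congr rfl fun s hs => ?_
    rw [(Finset.mem_filter.1 hs).2]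
  have rhs1 : margN B N ν n w' = ∑ s ∈ pi, (if s n = w' then ν s else 0) := by
    unfold margN
    rw [Finset.sum_filter]
  unfold lazyStep
  rw [rhs1, rhs2, Finset.mul_sum, Finset.mul_sum, ← Finset.sum_add_distrib]
  refine Finset.sum_congr rfl fun s _ => ?_
  by_cases hc : s n = w'
  · rw [if_pos hc, if_pos hc]
    field_simp
  · rw [if_neg hc, if_neg hc]
    ring

lemma margN_iter (B N : ℕ) (hB : 0 < B) (hN : 0 < N) (p : ℕ → ℝ)
    (hp1 : ∑ x ∈ Icc 1 B, p x = 1) (ν : (Fin N → ℕ) → ℝ) (n : Fin N) (t : ℕ) :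
    margN B N ((stepN B N p)^[t] ν) n
      = (lazyStep B p (1/(N:ℝ)))^[t] (margN B N ν n) := by
  induction t with
  | zero => simp
  | succ t ih =>
    rw [Function.iterate_succ_apply', Function.iterate_succ_apply',
      margN_stepN B N hB hN p hp1, ih]

-- note: lazyW from analytic part assumed available
lemma step1_lin (B : ℕ) (p : ℕ → ℝ) {ι : Type*} (F : Finset ι) (c : ι → ℝ)
    (f : ι → ℕ → ℝ) (w' : ℕ) :
    step1 B p (fun w => ∑ j ∈ F, c j * f j w) w'
      = ∑ j ∈ F, c j * step1 B p (f j) w' := by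
  unfold step1
  simp only [Finset.sum_mul]
  rw [Finset.sum_comm]
  refine Finset.sum_congr rfl fun j _ => ?_
  rw [Finset.mul_sum]
  refine Finset.sum_congr rfl fun w _ => ?_
  ring

lemma ec1_lin (B : ℕ) (p : ℕ → ℝ) {ι : Type*} (F : Finset ι) (c : ι → ℝ)
    (f : ι → ℕ → ℝ) :
    ec1 B p (fun w => ∑ j ∈ F, c j * f j w)
      = ∑ j ∈ F, c j * ec1 B p (f j) := by
  unfold ec1
  simp only [Finset.sum_mul]
  rw [Finset.sum_comm]
  refine Finset.sum_congr rfl fun j _ => ?_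
  rw [Finset.mul_sum]
  refine Finset.sum_congr rfl fun w _ => ?_
  ring

lemma step1_nonneg (B : ℕ) (p : ℕ → ℝ) (hp0 : ∀ x ∈ Icc 1 B, 0 ≤ p x)
    (μ : ℕ → ℝ) (hμ : ∀ w, 0 ≤ μ w) (w' : ℕ) : 0 ≤ step1 B p μ w' := by
  unfold step1
  refine Finset.sum_nonneg fun w _ => mul_nonneg (hμ w) ?_
  exact Finset.sum_nonneg fun x hx => hp0 x (Finset.mem_filter.1 hx).1

lemma step1_mass (B : ℕ) (hB : 0 < B) (p : ℕ → ℝ)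
    (hp1 : ∑ x ∈ Icc 1 B, p x = 1) (μ : ℕ → ℝ) :
    ∑ w' ∈ range B, step1 B p μ w' = ∑ w ∈ range B, μ w := by
  unfold step1
  rw [Finset.sum_comm]
  refine Finset.sum_congr rfl fun w hw => ?_
  rw [← Finset.mul_sum, Finset.sum_fiberwise_eq_sum_filter]
  rw [Finset.filter_true_of_mem
    (fun x hx => mem_range.2 (reelE_lt hB (mem_range.1 hw) hx)), hp1, mul_one]

lemma ec1_nonneg (B : ℕ) (p : ℕ → ℝ) (hp0 : ∀ x ∈ Icc 1 B, 0 ≤ p x)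
    (μ : ℕ → ℝ) (hμ : ∀ w, 0 ≤ μ w) : 0 ≤ ec1 B p μ := by
  unfold ec1
  refine Finset.sum_nonneg fun w _ => mul_nonneg (hμ w) ?_
  refine Finset.sum_nonneg fun x hx => mul_nonneg (hp0 x hx) ?_
  unfold reelC
  split
  · exact le_refl 0
  · exact Nat.cast_nonneg w

lemma ec1_le (B : ℕ) (p : ℕ → ℝ) (hp0 : ∀ x ∈ Icc 1 B, 0 ≤ p x)
    (hp1 : ∑ x ∈ Icc 1 B, p x = 1) (μ : ℕ → ℝ) (hμ : ∀ w, 0 ≤ μ w)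
    (hm : ∑ w ∈ range B, μ w = 1) : ec1 B p μ ≤ B := by
  unfold ec1
  have hC : ∀ w ∈ range B, ∑ x ∈ Icc 1 B, p x * reelC w x ≤ (B:ℝ) := by
    intro w hw
    have : ∀ x ∈ Icc 1 B, p x * reelC w x ≤ p x * B := by
      intro x hx
      refine mul_le_mul_of_nonneg_left ?_ (hp0 x hx)
      unfold reelC
      have hwB : w < B := mem_range.1 hw
      split
      · exact_mod_cast Nat.cast_nonneg B
      · exact_mod_cast hwB.le
    calc ∑ x ∈ Icc 1 B, p x * reelC w x ≤ ∑ x ∈ Icc 1 B, p x * B :=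
          Finset.sum_le_sum this
      _ = (B:ℝ) := by rw [← Finset.sum_mul, hp1, one_mul]
  calc ∑ w ∈ range B, μ w * ∑ x ∈ Icc 1 B, p x * reelC w x
      ≤ ∑ w ∈ range B, μ w * B := by
        refine Finset.sum_le_sum fun w hw => mul_le_mul_of_nonneg_left (hC w hw) (hμ w)
    _ = (B:ℝ) := by rw [← Finset.sum_mul, hm, one_mul]

lemma lazyW_col0 (α : ℝ) (t : ℕ) : lazyW α t 0 = (1 - α) ^ t := by
  unfold lazyW; simp

lemma lazy_comb (α : ℝ) (X : ℕ → ℝ) (t : ℕ) :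
    (1 - α) * ∑ j ∈ range (t+1), lazyW α t j * X j
      + α * ∑ j ∈ range (t+1), lazyW α t j * X (j+1)
    = ∑ j ∈ range (t+2), lazyW α (t+1) j * X j := by
  rw [Finset.sum_range_succ' (fun j => lazyW α (t+1) j * X j) (t+1)]
  have h1 : ∀ i ∈ range (t+1), lazyW α (t+1) (i+1) * X (i+1)
      = (1-α) * (lazyW α t (i+1) * X (i+1)) + α * (lazyW α t i * X (i+1)) := by
    intro i _
    rw [lazyW_pascal]
    ring
  rw [Finset.sum_congr rfl h1, Finset.sum_add_distrib, ← Finset.mul_sum, ← Finset.mul_sum]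
  have h2 : ∑ i ∈ range (t+1), lazyW α t (i+1) * X (i+1)
      = (∑ j ∈ range (t+1), lazyW α t j * X j) - lazyW α t 0 * X 0 := by
    have e1 := Finset.sum_range_succ (fun i => lazyW α t (i+1) * X (i+1)) t
    have e2 := Finset.sum_range_succ' (fun j => lazyW α t j * X j) t
    rw [e1, lazyW_eq_zero (Nat.lt_succ_self t), zero_mul, add_zero, e2]
    ring
  rw [h2, lazyW_col0, lazyW_col0]
  ring

lemma lazy_expand (B : ℕ) (p : ℕ → ℝ) (α : ℝ) (μ : ℕ → ℝ) (t : ℕ) :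
    (lazyStep B p α)^[t] μ
      = fun w => ∑ j ∈ range (t+1), lazyW α t j * ((step1 B p)^[j] μ) w := by
  induction t with
  | zero =>
    funext w
    simp [lazyW]
  | succ t ih =>
    rw [Function.iterate_succ_apply', ih]
    funext w
    show (1-α) * ∑ j ∈ range (t+1), lazyW α t j * ((step1 B p)^[j] μ) w
        + α * step1 B p
            (fun w => ∑ j ∈ range (t+1), lazyW α t j * ((step1 B p)^[j] μ) w) w
      = ∑ j ∈ range (t+1+1), lazyW α (t+1) j * ((step1 B p)^[j] μ) w
    rw [step1_lin]
    have h1 : ∀ j ∈ range (t+1), lazyW α t j * step1 B p ((step1 B p)^[j] μ) w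
        = lazyW α t j * ((step1 B p)^[j+1] μ) w := by
      intro j _
      rw [Function.iterate_succ_apply']
    rw [Finset.sum_congr rfl h1]
    exact lazy_comb α (fun j => ((step1 B p)^[j] μ) w) t

/-- if every single-reel Markov reward process (from any initial
distribution) has long-run average cost `g₁`, then the naive `N`-reel Markov
reward process under the random policy has the same long-run average cost
`g₁`, from any initial distribution; in particular the long-run average cost
is independent of `N`. -/
theorem naive_N_reel_gain_eq_single_reel_gain
    (B N : ℕ) (hB : 0 < B) (hN : 0 < N) (p : ℕ → ℝ)
    (hp0 : ∀ x ∈ Icc 1 B, 0 ≤ p x) (hp1 : ∑ x ∈ Icc 1 B, p x = 1)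
    (g1 : ℝ)
    (hg1 : ∀ μ0 : ℕ → ℝ, (∀ w, 0 ≤ μ0 w) → (∀ w, B ≤ w → μ0 w = 0) →
      (∑ w ∈ range B, μ0 w = 1) →
      Filter.Tendsto
        (fun T : ℕ => (1 / (T : ℝ)) * ∑ t ∈ range T, ec1 B p ((step1 B p)^[t] μ0))
        Filter.atTop (nhds g1))
    (ν0 : (Fin N → ℕ) → ℝ) (hν0 : ∀ s, 0 ≤ ν0 s)
    (hν0supp : ∀ s : Fin N → ℕ, (∃ n, B ≤ s n) → ν0 s = 0)
    (hν1 : ∑ s ∈ Fintype.piFinset (fun _ : Fin N => range B), ν0 s = 1) :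
    Filter.Tendsto
      (fun T : ℕ => (1 / (T : ℝ)) * ∑ t ∈ range T, ecN B N p ((stepN B N p)^[t] ν0))
      Filter.atTop (nhds g1) := by
  have hNr : (0:ℝ) < (N:ℝ) := by exact_mod_cast hN
  have hα0 : (0:ℝ) < 1/(N:ℝ) := by positivity
  have hα1 : 1/(N:ℝ) ≤ 1 := by
    rw [div_le_one hNr]
    exact_mod_cast hN
  -- probability facts about iterated marginals
  have hμprob : ∀ (n : Fin N) (j : ℕ),
      (∀ w, 0 ≤ (step1 B p)^[j] (margN B N ν0 n) w) ∧
        (∑ w ∈ range B, (step1 B p)^[j] (margN B N ν0 n) w = 1) := by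
    intro n j
    induction j with
    | zero =>
      refine ⟨margN_nonneg B N ν0 hν0 n, ?_⟩
      rw [Function.iterate_zero_apply, margN_mass, hν1]
    | succ j ihj =>
      constructor
      · intro w
        rw [Function.iterate_succ_apply']
        exact step1_nonneg B p hp0 _ ihj.1 w
      · rw [Function.iterate_succ_apply', step1_mass B hB p hp1]
        exact ihj.2
  have haM : ∀ (n : Fin N) (j : ℕ),
      |ec1 B p ((step1 B p)^[j] (margN B N ν0 n))| ≤ (B:ℝ) := by
    intro n j
    rw [abs_le]
    constructor
    · have h1 := ec1_nonneg B p hp0 _ (hμprob n j).1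
      have h2 : (0:ℝ) ≤ B := Nat.cast_nonneg B
      linarith
    · exact ec1_le B p hp0 hp1 _ (hμprob n j).1 (hμprob n j).2
  have hcesaro : ∀ n : Fin N,
      Filter.Tendsto (fun T : ℕ => (1/(T:ℝ)) *
        ∑ j ∈ range T, ec1 B p ((step1 B p)^[j] (margN B N ν0 n)))
        Filter.atTop (nhds g1) := by
    intro n
    refine hg1 (margN B N ν0 n) (margN_nonneg B N ν0 hν0 n)
      (fun w hw => margN_supp B N ν0 n w hw) ?_
    rw [margN_mass, hν1]
  have heuler : ∀ n : Fin N,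
      Filter.Tendsto (fun T : ℕ => (1/(T:ℝ)) * ∑ t ∈ range T,
        ∑ j ∈ range (t+1), lazyW (1/(N:ℝ)) t j *
          ec1 B p ((step1 B p)^[j] (margN B N ν0 n)))
        Filter.atTop (nhds g1) :=
    fun n => euler_cesaro hα0 hα1 _ (B:ℝ) (haM n) g1 (hcesaro n)
  -- pointwise identity for the N-reel expected cost
  have hkey : ∀ t : ℕ, ecN B N p ((stepN B N p)^[t] ν0)
      = (1/(N:ℝ)) * ∑ n : Fin N, ∑ j ∈ range (t+1), lazyW (1/(N:ℝ)) t j *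
          ec1 B p ((step1 B p)^[j] (margN B N ν0 n)) := by
    intro t
    rw [ecN_eq]
    congr 1
    refine Finset.sum_congr rfl fun n _ => ?_
    rw [margN_iter B N hB hN p hp1, lazy_expand, ec1_lin]
  -- rearrange the time average
  have hfun : ∀ T : ℕ,
      (1/(T:ℝ)) * ∑ t ∈ range T, ecN B N p ((stepN B N p)^[t] ν0)
      = (1/(N:ℝ)) * ∑ n : Fin N, ((1/(T:ℝ)) * ∑ t ∈ range T,
          ∑ j ∈ range (t+1), lazyW (1/(N:ℝ)) t j *
            ec1 B p ((step1 B p)^[j] (margN B N ν0 n))) := by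
    intro T
    simp only [hkey]
    rw [← Finset.mul_sum, Finset.sum_comm]
    simp only [← Finset.mul_sum]
    ring
  have hgval : (1/(N:ℝ)) * ∑ _n : Fin N, g1 = g1 := by
    rw [Finset.sum_const, Finset.card_univ, Fintype.card_fin, nsmul_eq_mul]
    field_simp
  have hlim := (tendsto_finset_sum Finset.univ
    (fun n (_ : n ∈ Finset.univ) => heuler n)).const_mul (1/(N:ℝ))
  rw [hgval] at hlim
  exact hlim.congr fun T => (hfun T).symm
end

section
/- Suppose h_1 : W → ℝ and g_1 ∈ ℝ satisfy the single-reel Bellman equation h_1(w) = -g_1 + Σ_x p(x)·(c(w,x) + h_1(e(w,x))) for all w in W. Then the function h_N(w_1,...,w_N) := Σ_{n=1}^N h_1(w_n), together with gain g_N := g_1, satisfies the naive N-reel Bellman equation under the random policy: h_N(w_1,...,w_N) = -g_N + (1/N)·Σ_{n=1}^N Σ_x p(x)·(c(w_n,x) + h_N(w_1,..., e(w_n,x), ..., w_N)) for all (w_1,...,w_N) in W^N. -/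
open Finset

/-- Theorem 1: if `(g₁, h₁)` solves the single-reel Bellman
equation, then `h_N(w₁,...,w_N) := Σ_n h₁(w_n)` together with gain `g₁`
solves the naive `N`-reel Bellman equation under the random policy. -/
theorem naive_N_reel_bias_decomposition
    (B N : ℕ) (hB : 0 < B) (hN : 0 < N) (p : ℕ → ℝ)
    (hp0 : ∀ x ∈ Icc 1 B, 0 ≤ p x) (hp1 : ∑ x ∈ Icc 1 B, p x = 1)
    (h1 : ℕ → ℝ) (g1 : ℝ)
    (hBellman : ∀ w < B,
      h1 w = -g1 + ∑ x ∈ Icc 1 B, p x * (reelC w x + h1 (reelE B w x))) :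
    ∀ s : Fin N → ℕ, (∀ n, s n < B) →
      (∑ n : Fin N, h1 (s n)) =
        -g1 + (1 / (N : ℝ)) * ∑ n : Fin N, ∑ x ∈ Icc 1 B, p x *
          (reelC (s n) x +
            ∑ m : Fin N, h1 (Function.update s n (reelE B (s n) x) m)) := by
  intro s hs
  set S : ℝ := ∑ n : Fin N, h1 (s n) with hS
  have hupd : ∀ (n : Fin N) (e : ℕ),
      (∑ m : Fin N, h1 (Function.update s n e m)) = S - h1 (s n) + h1 e := by
    intro n e
    have : (∑ m : Fin N, h1 (Function.update s n e m))
        = ∑ m : Fin N, Function.update (fun m => h1 (s m)) n (h1 e) m := by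
      refine Finset.sum_congr rfl fun m _ => ?_
      exact (Function.apply_update (fun _ v => h1 v) s n e m).symm ▸ rfl
    rw [this, Finset.sum_update_of_mem (Finset.mem_univ n)]
    have := Finset.sum_eq_sum_sdiff_singleton_add (Finset.mem_univ n) (fun m => h1 (s m))
    rw [hS, this]
    ring
  have key : ∀ n : Fin N,
      (∑ x ∈ Icc 1 B, p x * (reelC (s n) x +
        ∑ m : Fin N, h1 (Function.update s n (reelE B (s n) x) m))) = g1 + S := by
    intro n
    have hb := hBellman (s n) (hs n)
    calc (∑ x ∈ Icc 1 B, p x * (reelC (s n) x +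
          ∑ m : Fin N, h1 (Function.update s n (reelE B (s n) x) m)))
        = ∑ x ∈ Icc 1 B, (p x * (reelC (s n) x + h1 (reelE B (s n) x))
            + p x * (S - h1 (s n))) := by
          refine Finset.sum_congr rfl fun x _ => ?_
          rw [hupd n (reelE B (s n) x)]; ring
      _ = (∑ x ∈ Icc 1 B, p x * (reelC (s n) x + h1 (reelE B (s n) x)))
            + (∑ x ∈ Icc 1 B, p x) * (S - h1 (s n)) := by
          rw [Finset.sum_add_distrib, Finset.sum_mul]
      _ = g1 + S := by rw [hp1]; nlinarith [hb]
  have hsum : (∑ n : Fin N, ∑ x ∈ Icc 1 B, p x * (reelC (s n) x +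
      ∑ m : Fin N, h1 (Function.update s n (reelE B (s n) x) m))) = N * (g1 + S) := by
    rw [Finset.sum_congr rfl fun n _ => key n]
    simp
    ring
  rw [hsum]
  have hN' : (N : ℝ) ≠ 0 := Nat.cast_ne_zero.mpr hN.ne'
  field_simp
  ring
end

section
/- Suppose h_1 : W → ℝ and g_1 ∈ ℝ satisfy the single-reel Bellman equation. Then for any θ ∈ ℝ, the augmented-model bias under the random policy admits the fully decomposed form ĥ_N(w_1,...,w_N,x) = (1/N)·Σ_{n=1}^N ( c(w_n,x) + h_1(e(w_n,x)) + (N-1)·h_1(w_n) ) + θ, i.e., this function satisfies the augmented N-reel Bellman equation with gain g_1. -/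
open Finset

/-- Corollary 1: if `(g₁, h₁)` solves the single-reel Bellman
equation, then for any `θ`, the fully decomposed function
`ĥ_N(w,x) := (1/N)·Σ_n (c(w_n,x) + h₁(e(w_n,x)) + (N-1)·h₁(w_n)) + θ`
together with gain `g₁` solves the augmented `N`-reel Bellman equation under
the random policy. -/
theorem augmented_N_reel_bias_fully_decomposed
    (B N : ℕ) (hB : 0 < B) (hN : 0 < N) (p : ℕ → ℝ)
    (hp0 : ∀ x ∈ Icc 1 B, 0 ≤ p x) (hp1 : ∑ x ∈ Icc 1 B, p x = 1)
    (h1 : ℕ → ℝ) (g1 : ℝ)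
    (hBellman : ∀ w < B,
      h1 w = -g1 + ∑ x ∈ Icc 1 B, p x * (reelC w x + h1 (reelE B w x)))
    (θ : ℝ) (hhat : (Fin N → ℕ) → ℕ → ℝ)
    (hhat_def : ∀ s x, hhat s x =
      (1 / (N : ℝ)) * (∑ n : Fin N, (reelC (s n) x + h1 (reelE B (s n) x) +
        ((N : ℝ) - 1) * h1 (s n))) + θ) :
    ∀ s : Fin N → ℕ, (∀ n, s n < B) → ∀ x ∈ Icc 1 B,
      hhat s x =
        -g1 + (1 / (N : ℝ)) * ∑ n : Fin N,
          (reelC (s n) x + ∑ x' ∈ Icc 1 B, p x' *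
            hhat (Function.update s n (reelE B (s n) x)) x') := by
  intro s hs x hx
  have hNne : (N : ℝ) ≠ 0 := Nat.cast_ne_zero.mpr hN.ne'
  have heB : ∀ w, w < B → ∀ y ∈ Icc 1 B, reelE B w y < B := by
    intro w hw y hy
    simp only [mem_Icc] at hy
    unfold reelE
    split <;> omega
  -- key lemma
  have key : ∀ s' : Fin N → ℕ, (∀ m, s' m < B) →
      ∑ x' ∈ Icc 1 B, p x' * hhat s' x' = (∑ m : Fin N, h1 (s' m)) + g1 + θ := by
    intro s' hs'
    have step : ∀ m : Fin N,
        ∑ x' ∈ Icc 1 B, p x' * (reelC (s' m) x' + h1 (reelE B (s' m) x') +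
          ((N:ℝ)-1) * h1 (s' m)) = (N:ℝ) * h1 (s' m) + g1 := by
      intro m
      have hb := hBellman (s' m) (hs' m)
      have e1 : ∑ x' ∈ Icc 1 B, p x' * (reelC (s' m) x' + h1 (reelE B (s' m) x') +
          ((N:ℝ)-1) * h1 (s' m))
        = (∑ x' ∈ Icc 1 B, p x' * (reelC (s' m) x' + h1 (reelE B (s' m) x')))
          + (∑ x' ∈ Icc 1 B, p x') * (((N:ℝ)-1) * h1 (s' m)) := by
        rw [sum_mul, ← sum_add_distrib]
        exact sum_congr rfl fun x' _ => by ring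
      rw [e1, hp1]
      have hsum : ∑ x' ∈ Icc 1 B, p x' * (reelC (s' m) x' + h1 (reelE B (s' m) x'))
          = h1 (s' m) + g1 := by linarith
      rw [hsum]; ring
    calc ∑ x' ∈ Icc 1 B, p x' * hhat s' x'
        = ∑ x' ∈ Icc 1 B, ((1/(N:ℝ)) * (∑ m : Fin N, p x' * (reelC (s' m) x' +
            h1 (reelE B (s' m) x') + ((N:ℝ)-1) * h1 (s' m))) + p x' * θ) := by
          refine sum_congr rfl fun x' _ => ?_
          rw [hhat_def, ← mul_sum]
          ring
      _ = (1/(N:ℝ)) * (∑ m : Fin N, ∑ x' ∈ Icc 1 B, p x' * (reelC (s' m) x' +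
            h1 (reelE B (s' m) x') + ((N:ℝ)-1) * h1 (s' m))) + (∑ x' ∈ Icc 1 B, p x') * θ := by
          rw [sum_add_distrib, ← mul_sum, sum_comm, sum_mul]
      _ = (1/(N:ℝ)) * (∑ m : Fin N, ((N:ℝ) * h1 (s' m) + g1)) + θ := by
          rw [hp1, one_mul]
          congr 1
          congr 1
          exact sum_congr rfl fun m _ => step m
      _ = (∑ m : Fin N, h1 (s' m)) + g1 + θ := by
          rw [sum_add_distrib, ← mul_sum, sum_const, card_univ, Fintype.card_fin,
            nsmul_eq_mul]
          field_simp
  -- apply key to each updated state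
  have hupd : ∀ n : Fin N,
      ∑ x' ∈ Icc 1 B, p x' * hhat (Function.update s n (reelE B (s n) x)) x'
        = (∑ m : Fin N, h1 (s m)) - h1 (s n) + h1 (reelE B (s n) x) + g1 + θ := by
    intro n
    have hlt : ∀ m, Function.update s n (reelE B (s n) x) m < B := by
      intro m
      rcases eq_or_ne m n with rfl | hmn
      · simpa using heB (s m) (hs m) x hx
      · simpa [Function.update_of_ne hmn] using hs m
    rw [key _ hlt]
    have : ∑ m : Fin N, h1 (Function.update s n (reelE B (s n) x) m)
        = (∑ m : Fin N, h1 (s m)) - h1 (s n) + h1 (reelE B (s n) x) := by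
      rw [show (fun m => h1 (Function.update s n (reelE B (s n) x) m))
            = Function.update (fun m => h1 (s m)) n (h1 (reelE B (s n) x)) from ?_]
      · rw [Finset.sum_update_of_mem (mem_univ n), ← Finset.sum_erase_eq_sub (mem_univ n),
          sdiff_singleton_eq_erase]
        ring
      · funext m
        rcases eq_or_ne m n with rfl | hmn
        · simp
        · simp [Function.update_of_ne hmn]
    rw [this]
  -- final computation
  rw [hhat_def]
  have hR : ∑ n : Fin N, (reelC (s n) x + ∑ x' ∈ Icc 1 B, p x' *
      hhat (Function.update s n (reelE B (s n) x)) x')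
    = ∑ n : Fin N, (reelC (s n) x + h1 (reelE B (s n) x) - h1 (s n))
      + (N:ℝ) * ((∑ m : Fin N, h1 (s m)) + g1 + θ) := by
    calc ∑ n : Fin N, (reelC (s n) x + ∑ x' ∈ Icc 1 B, p x' *
          hhat (Function.update s n (reelE B (s n) x)) x')
        = ∑ n : Fin N, ((reelC (s n) x + h1 (reelE B (s n) x) - h1 (s n))
            + ((∑ m : Fin N, h1 (s m)) + g1 + θ)) := by
          refine sum_congr rfl fun n _ => ?_
          rw [hupd n]; ring
      _ = _ := by
          rw [sum_add_distrib, sum_const, card_univ, Fintype.card_fin, nsmul_eq_mul]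
  rw [hR]
  have hL : ∑ n : Fin N, (reelC (s n) x + h1 (reelE B (s n) x) + ((N:ℝ)-1) * h1 (s n))
      = ∑ n : Fin N, (reelC (s n) x + h1 (reelE B (s n) x) - h1 (s n))
        + (N:ℝ) * ∑ m : Fin N, h1 (s m) := by
    rw [mul_sum, ← sum_add_distrib]
    exact sum_congr rfl fun n _ => by ring
  rw [hL]
  field_simp
  ring
end

section
/- Suppose h_1 : W → ℝ and g_1 ∈ ℝ satisfy the single-reel Bellman equation. Define the index policy which, in augmented state (w_1,...,w_N,x), selects a reel n* minimizing c(w_n,x) + h_1(e(w_n,x)) - h_1(w_n) over n in {1,...,N}. Then the Bellman error of the index policy evaluated at the random-policy bias ĥ_N(w_1,...,w_N,x) = (1/N)·Σ_n (c(w_n,x) + h_1(e(w_n,x)) + (N-1)h_1(w_n)) and gain g_1 is, at each state s = (w_1,...,w_N,x), equal to [c(w_{n*},x) + h_1(e(w_{n*},x)) - h_1(w_{n*})] - (1/N)·Σ_{n=1}^N [c(w_n,x) + h_1(e(w_n,x)) - h_1(w_n)], and this quantity is nonpositive. -/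
open Finset

/-- the Bellman error of the index policy, evaluated at the
random-policy bias `ĥ_N(w,x) = (1/N)·Σ_n (c(w_n,x) + h₁(e(w_n,x)) +
(N-1)·h₁(w_n))` and gain `g₁`, equals at each state the index score of the
chosen reel minus the average index score over all reels, and is
nonpositive. -/
theorem index_policy_bellman_error
    (B N : ℕ) (hB : 0 < B) (hN : 0 < N) (p : ℕ → ℝ)
    (hp0 : ∀ x ∈ Icc 1 B, 0 ≤ p x) (hp1 : ∑ x ∈ Icc 1 B, p x = 1)
    (h1 : ℕ → ℝ) (g1 : ℝ)
    (hBellman : ∀ w < B,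
      h1 w = -g1 + ∑ x ∈ Icc 1 B, p x * (reelC w x + h1 (reelE B w x)))
    (hhat : (Fin N → ℕ) → ℕ → ℝ)
    (hhat_def : ∀ s x, hhat s x =
      (1 / (N : ℝ)) * (∑ n : Fin N, (reelC (s n) x + h1 (reelE B (s n) x) +
        ((N : ℝ) - 1) * h1 (s n))))
    (nstar : (Fin N → ℕ) → ℕ → Fin N)
    (hmin : ∀ (s : Fin N → ℕ) (x : ℕ) (n : Fin N),
      reelC (s (nstar s x)) x + h1 (reelE B (s (nstar s x)) x)
          - h1 (s (nstar s x)) ≤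
        reelC (s n) x + h1 (reelE B (s n) x) - h1 (s n)) :
    ∀ s : Fin N → ℕ, (∀ n, s n < B) → ∀ x ∈ Icc 1 B,
      (reelC (s (nstar s x)) x - g1 +
          (∑ x' ∈ Icc 1 B, p x' *
            hhat (Function.update s (nstar s x)
              (reelE B (s (nstar s x)) x)) x') - hhat s x
        = (reelC (s (nstar s x)) x + h1 (reelE B (s (nstar s x)) x)
              - h1 (s (nstar s x)))
          - (1 / (N : ℝ)) * ∑ n : Fin N,
              (reelC (s n) x + h1 (reelE B (s n) x) - h1 (s n))) ∧
      (reelC (s (nstar s x)) x - g1 +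
          (∑ x' ∈ Icc 1 B, p x' *
            hhat (Function.update s (nstar s x)
              (reelE B (s (nstar s x)) x)) x') - hhat s x ≤ 0) := by

  intro s hs x hx
  simp only [Finset.mem_Icc] at hx
  set j := nstar s x with hj
  set e := reelE B (s j) x with he
  set s' := Function.update s j e with hs'def
  -- all updated components are < B
  have hs' : ∀ n, s' n < B := by
    intro n
    by_cases hn : n = j
    · subst hn
      have hsj := hs j
      simp only [hs'def, Function.update_self]
      unfold e
      unfold reelE
      split <;> omega
    · simp only [hs'def, Function.update_of_ne hn]
      exact hs n
  -- Bellman consequence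
  have key : ∀ n : Fin N,
      ∑ x' ∈ Icc 1 B, p x' * (reelC (s' n) x' + h1 (reelE B (s' n) x'))
        = h1 (s' n) + g1 := by
    intro n
    have := hBellman (s' n) (hs' n)
    linarith
  have hNne : (N : ℝ) ≠ 0 := Nat.cast_ne_zero.mpr hN.ne'
  -- expected bias of next state
  have hsum : ∑ x' ∈ Icc 1 B, p x' * hhat s' x'
      = g1 + ∑ n : Fin N, h1 (s' n) := by
    have : ∀ x' ∈ Icc 1 B, p x' * hhat s' x'
        = (1 / (N : ℝ)) * ∑ n : Fin N,
            (p x' * (reelC (s' n) x' + h1 (reelE B (s' n) x'))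
              + p x' * (((N : ℝ) - 1) * h1 (s' n))) := by
      intro x' _
      have step : ∀ n : Fin N,
          p x' * (reelC (s' n) x' + h1 (reelE B (s' n) x'))
            + p x' * (((N : ℝ) - 1) * h1 (s' n))
          = p x' * (reelC (s' n) x' + h1 (reelE B (s' n) x')
              + ((N : ℝ) - 1) * h1 (s' n)) := fun n => by ring
      rw [Finset.sum_congr rfl (fun n _ => step n), ← Finset.mul_sum, hhat_def]
      ring
    rw [Finset.sum_congr rfl this]
    rw [← Finset.mul_sum, Finset.sum_comm]
    have : ∀ n : Fin N, ∑ x' ∈ Icc 1 B,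
        (p x' * (reelC (s' n) x' + h1 (reelE B (s' n) x'))
          + p x' * (((N : ℝ) - 1) * h1 (s' n)))
        = g1 + (N : ℝ) * h1 (s' n) := by
      intro n
      rw [Finset.sum_add_distrib, key n, ← Finset.sum_mul, hp1]
      ring
    rw [Finset.sum_congr rfl (fun n _ => this n)]
    rw [Finset.sum_add_distrib, ← Finset.mul_sum, Finset.sum_const,
      Finset.card_univ, Fintype.card_fin, nsmul_eq_mul]
    field_simp
  -- sum over updated state
  have hupd : ∑ n : Fin N, h1 (s' n)
      = (∑ n : Fin N, h1 (s n)) - h1 (s j) + h1 e := by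
    have : (fun n => h1 (s' n)) = Function.update (fun n => h1 (s n)) j (h1 e) := by
      funext n
      by_cases hn : n = j
      · subst hn; simp [hs'def]
      · simp [hs'def, Function.update_of_ne hn]
    rw [show ∑ n : Fin N, h1 (s' n) = ∑ n : Fin N,
        Function.update (fun n => h1 (s n)) j (h1 e) n from by rw [← this]]
    rw [Finset.sum_update_of_mem (Finset.mem_univ j)]
    rw [Finset.sum_eq_sum_sdiff_singleton_add (Finset.mem_univ j) (fun n => h1 (s n))]
    ring
  -- main equality
  have heq : reelC (s j) x - g1 +
      (∑ x' ∈ Icc 1 B, p x' * hhat s' x') - hhat s x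
      = (reelC (s j) x + h1 e - h1 (s j))
        - (1 / (N : ℝ)) * ∑ n : Fin N,
            (reelC (s n) x + h1 (reelE B (s n) x) - h1 (s n)) := by
    rw [hsum, hupd, hhat_def]
    have expand1 : ∑ n : Fin N, (reelC (s n) x + h1 (reelE B (s n) x)
        + ((N : ℝ) - 1) * h1 (s n))
        = (∑ n : Fin N, (reelC (s n) x + h1 (reelE B (s n) x)))
          + ((N : ℝ) - 1) * ∑ n : Fin N, h1 (s n) := by
      rw [Finset.sum_add_distrib, Finset.mul_sum]
    have expand2 : ∑ n : Fin N, (reelC (s n) x + h1 (reelE B (s n) x) - h1 (s n))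
        = (∑ n : Fin N, (reelC (s n) x + h1 (reelE B (s n) x)))
          - ∑ n : Fin N, h1 (s n) := by
      rw [Finset.sum_sub_distrib]
    rw [expand1, expand2]
    field_simp
    ring
  refine ⟨heq, ?_⟩
  rw [heq]
  have hNpos : (0 : ℝ) < N := Nat.cast_pos.mpr hN
  have hle : (N : ℝ) * (reelC (s j) x + h1 e - h1 (s j))
      ≤ ∑ n : Fin N, (reelC (s n) x + h1 (reelE B (s n) x) - h1 (s n)) := by
    have := Finset.sum_le_sum (fun n (_ : n ∈ Finset.univ) => hmin s x n)
    simp [Finset.sum_const, Finset.card_univ, Fintype.card_fin,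
      nsmul_eq_mul, ← he, ← hj] at this
    rw [Finset.sum_sub_distrib]
    linarith
  rw [sub_nonpos]
  rw [one_div, inv_mul_eq_div, le_div_iff₀ hNpos]
  linarith
end
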